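/- Let ε > 0, k > 0, let v : ℝ³ → ℝ³ be a C³ vector field, let λ : ℝ³ → ℝ be a C³ function with compact support, and define G := −εΔλ + kλ + v·∇λ + ½(div v)λ. Then ε ∫_{ℝ³} (Δλ)² dx + k ∫_{ℝ³} |∇λ|² dx + Σ_{i,j=1}^{3} ∫_{ℝ³} (∂v_i/∂x_j)(∂λ/∂x_i)(∂λ/∂x_j) dx − ¼ ∫_{ℝ³} λ² Δ(div v) dx = ∫_{ℝ³} ∇G·∇λ dx. -/

import Mathlib

open MeasureTheory

noncomputable section

/-- Partial derivative in the `i`-th coordinate direction on `ℝ³`. -/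
def pd {F : Type*} [NormedAddCommGroup F] [NormedSpace ℝ F]
    (f : EuclideanSpace ℝ (Fin 3) → F) (i : Fin 3) (x : EuclideanSpace ℝ (Fin 3)) : F :=
  fderiv ℝ f x (EuclideanSpace.single i 1)

/-- Divergence of a vector field on `ℝ³`. -/
def divg (v : EuclideanSpace ℝ (Fin 3) → EuclideanSpace ℝ (Fin 3))
    (x : EuclideanSpace ℝ (Fin 3)) : ℝ :=
  ∑ i, pd (fun y => v y i) i x

/-- Laplacian on `ℝ³`. -/
def lap {F : Type*} [NormedAddCommGroup F] [NormedSpace ℝ F]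
    (f : EuclideanSpace ℝ (Fin 3) → F) (x : EuclideanSpace ℝ (Fin 3)) : F :=
  ∑ i, pd (pd f i) i x

abbrev E3 := EuclideanSpace ℝ (Fin 3)

lemma contDiff_pd {n m : WithTop ℕ∞} {f : E3 → ℝ} (hf : ContDiff ℝ n f) (h : m + 1 ≤ n)
    (i : Fin 3) : ContDiff ℝ m (pd f i) :=
  (hf.fderiv_right h).clm_apply contDiff_const

lemma hasCompactSupport_pd {f : E3 → ℝ} (h : HasCompactSupport f) (i : Fin 3) :
    HasCompactSupport (pd f i) :=
  h.fderiv_apply ℝ (EuclideanSpace.single i 1)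

lemma pd_add {f g : E3 → ℝ} {x : E3} (hf : DifferentiableAt ℝ f x)
    (hg : DifferentiableAt ℝ g x) (i : Fin 3) :
    pd (fun y => f y + g y) i x = pd f i x + pd g i x := by
  simp [pd, fderiv_fun_add hf hg]

lemma pd_mul {f g : E3 → ℝ} {x : E3} (hf : DifferentiableAt ℝ f x)
    (hg : DifferentiableAt ℝ g x) (i : Fin 3) :
    pd (fun y => f y * g y) i x = pd f i x * g x + f x * pd g i x := by
  simp only [pd, fderiv_fun_mul hf hg, ContinuousLinearMap.add_apply, ContinuousLinearMap.smul_apply,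
    smul_eq_mul]
  ring

lemma pd_const_mul {f : E3 → ℝ} {x : E3} (hf : DifferentiableAt ℝ f x) (c : ℝ) (i : Fin 3) :
    pd (fun y => c * f y) i x = c * pd f i x := by
  simp [pd, fderiv_const_mul hf c]

lemma pd_sum {f : Fin 3 → E3 → ℝ} {x : E3} (hf : ∀ j, DifferentiableAt ℝ (f j) x) (i : Fin 3) :
    pd (fun y => ∑ j, f j y) i x = ∑ j, pd (f j) i x := by
  simp [pd, fderiv_fun_sum (fun j _ => hf j)]

lemma pd_comm {f : E3 → ℝ} (hf : ContDiff ℝ 2 f) (i j : Fin 3) (x : E3) :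
    pd (pd f i) j x = pd (pd f j) i x := by
  have hd : DifferentiableAt ℝ (fderiv ℝ f) x :=
    ((hf.fderiv_right (m := 1) (by norm_num)).differentiable (by norm_num)) x
  have key : ∀ a b : Fin 3, pd (pd f a) b x =
      fderiv ℝ (fderiv ℝ f) x (EuclideanSpace.single b 1) (EuclideanSpace.single a 1) := by
    intro a b
    have : pd (pd f a) b x
        = fderiv ℝ (fun y => (fderiv ℝ f y) (EuclideanSpace.single a 1)) x
            (EuclideanSpace.single b 1) := rfl
    rw [this, fderiv_clm_apply hd (differentiableAt_const _)]
    simp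
  rw [key i j, key j i]
  exact (hf.contDiffAt.isSymmSndFDerivAt (by norm_num)).eq _ _

lemma intg {f g : E3 → ℝ} (hf : Continuous f) (hg : Continuous g)
    (hs : HasCompactSupport g) : Integrable (fun x => f x * g x) := by
  refine (hf.mul hg).integrable_of_hasCompactSupport ?_
  exact (hs.mul_left)

lemma intg' {f g : E3 → ℝ} (hf : Continuous f) (hg : Continuous g)
    (hs : HasCompactSupport f) : Integrable (fun x => f x * g x) := by
  refine (hf.mul hg).integrable_of_hasCompactSupport ?_
  exact (hs.mul_right)

lemma ibp_right {f g : E3 → ℝ} (hf : ContDiff ℝ 1 f) (hg : ContDiff ℝ 1 g)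
    (hgs : HasCompactSupport g) (i : Fin 3) :
    ∫ x, f x * pd g i x = - ∫ x, pd f i x * g x := by
  have h1 : Continuous (pd f i) := (contDiff_pd (m := 0) hf (by norm_num) i).continuous
  have h2 : Continuous (pd g i) := (contDiff_pd (m := 0) hg (by norm_num) i).continuous
  exact integral_mul_fderiv_eq_neg_fderiv_mul_of_integrable
    (intg h1 hg.continuous hgs) (intg hf.continuous h2 (hasCompactSupport_pd hgs i))
    (intg hf.continuous hg.continuous hgs)
    (fun x _ => hf.differentiable one_ne_zero x) (fun x _ => hg.differentiable one_ne_zero x)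

lemma ibp_left {f g : E3 → ℝ} (hf : ContDiff ℝ 1 f) (hg : ContDiff ℝ 1 g)
    (hfs : HasCompactSupport f) (i : Fin 3) :
    ∫ x, f x * pd g i x = - ∫ x, pd f i x * g x := by
  have h1 : Continuous (pd f i) := (contDiff_pd (m := 0) hf (by norm_num) i).continuous
  have h2 : Continuous (pd g i) := (contDiff_pd (m := 0) hg (by norm_num) i).continuous
  exact integral_mul_fderiv_eq_neg_fderiv_mul_of_integrable
    (intg' h1 hg.continuous (hasCompactSupport_pd hfs i)) (intg' hf.continuous h2 hfs)
    (intg' hf.continuous hg.continuous hfs)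
    (fun x _ => hf.differentiable one_ne_zero x) (fun x _ => hg.differentiable one_ne_zero x)

/-- multiplier identity obtained by testing the regularized
transport equation `-εΔλ + kλ + v·∇λ + ½(div v)λ = G` with `Δλ` and integrating
by parts, for a `C³` vector field `v` and a compactly supported `C³` function `λ`. -/
theorem regularized_multiplier_identity
    (ε k : ℝ) (hε : 0 < ε) (hk : 0 < k)
    (v : EuclideanSpace ℝ (Fin 3) → EuclideanSpace ℝ (Fin 3))
    (l : EuclideanSpace ℝ (Fin 3) → ℝ)
    (hv : ContDiff ℝ 3 v) (hl : ContDiff ℝ 3 l) (hls : HasCompactSupport l)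
    (G : EuclideanSpace ℝ (Fin 3) → ℝ)
    (hG : G = fun x => -ε * lap l x + k * l x + (∑ i, v x i * pd l i x)
        + (1 / 2) * divg v x * l x) :
    ε * (∫ x, (lap l x) ^ 2) + k * (∫ x, ∑ i, (pd l i x) ^ 2)
        + (∑ i, ∑ j, ∫ x, pd (fun y => v y i) j x * pd l i x * pd l j x)
        - (1 / 4) * (∫ x, (l x) ^ 2 * lap (divg v) x)
      = ∫ x, ∑ i, pd G i x * pd l i x := by
  -- basic regularity facts
  have hl2 : ContDiff ℝ 2 l := hl.of_le (by norm_num)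
  have hl1 : ContDiff ℝ 1 l := hl.of_le (by norm_num)
  have dld : Differentiable ℝ l := hl1.differentiable one_ne_zero
  have hdl : ∀ i, ContDiff ℝ 2 (pd l i) := fun i => contDiff_pd hl (by norm_num) i
  have hdl1 : ∀ i, ContDiff ℝ 1 (pd l i) := fun i => (hdl i).of_le (by norm_num)
  have hdlc : ∀ i, Continuous (pd l i) := fun i => (hdl1 i).continuous
  have dl_d : ∀ i, Differentiable ℝ (pd l i) := fun i => (hdl1 i).differentiable one_ne_zero
  have hdls : ∀ i, HasCompactSupport (pd l i) := fun i => hasCompactSupport_pd hls i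
  have hddl : ∀ i j, ContDiff ℝ 1 (pd (pd l i) j) := fun i j => contDiff_pd (hdl i) (by norm_num) j
  have hddlc : ∀ i j, Continuous (pd (pd l i) j) := fun i j => (hddl i j).continuous
  have hddls : ∀ i j, HasCompactSupport (pd (pd l i) j) := fun i j =>
    hasCompactSupport_pd (hdls i) j
  have hvc : ∀ i, ContDiff ℝ 3 (fun y => v y i) := fun i =>
    (EuclideanSpace.proj (𝕜 := ℝ) i).contDiff.comp hv
  have hvcc : ∀ i, Continuous (fun y => v y i) := fun i => (hvc i).continuous
  have dvc : ∀ i, Differentiable ℝ (fun y => v y i) := fun i =>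
    (hvc i).differentiable (by norm_num)
  have hpdv : ∀ j i, ContDiff ℝ 2 (pd (fun y => v y j) i) := fun j i =>
    contDiff_pd (hvc j) (by norm_num) i
  have hpdvc : ∀ j i, Continuous (pd (fun y => v y j) i) := fun j i => (hpdv j i).continuous
  have hdv : ContDiff ℝ 2 (divg v) := by
    show ContDiff ℝ 2 fun x => ∑ i, pd (fun y => v y i) i x
    exact ContDiff.sum fun i _ => hpdv i i
  have ddv : Differentiable ℝ (divg v) := hdv.differentiable (by norm_num)
  have hdvc : Continuous (divg v) := hdv.continuous
  have hddv : ∀ i, ContDiff ℝ 1 (pd (divg v) i) := fun i => contDiff_pd hdv (by norm_num) i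
  have hdddvc : ∀ i, Continuous (pd (pd (divg v) i) i) := fun i =>
    (contDiff_pd (m := 0) (hddv i) (by norm_num) i).continuous
  have hlapl : ContDiff ℝ 1 (lap l) := by
    show ContDiff ℝ 1 fun x => ∑ i, pd (pd l i) i x
    exact ContDiff.sum fun i _ => hddl i i
  have dlapl : Differentiable ℝ (lap l) := hlapl.differentiable one_ne_zero
  have hq : ContDiff ℝ 1 (fun x => ∑ i, pd l i x * pd l i x) :=
    ContDiff.sum fun i _ => (hdl1 i).mul (hdl1 i)
  have hqs : HasCompactSupport (fun x => ∑ i, pd l i x * pd l i x) := by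
    apply HasCompactSupport.intro hls
    intro x hx
    have hz : fderiv ℝ l x = 0 := by
      by_contra h
      exact hx (support_fderiv_subset ℝ (by simpa [Function.mem_support] using h))
    simp [pd, hz]
  have hr : ContDiff ℝ 1 (fun x => l x * l x) := hl1.mul hl1
  have hrs : HasCompactSupport (fun x => l x * l x) := hls.mul_right
  -- the four pieces of G
  have hG' : G = fun x => (-ε * lap l x + k * l x + ∑ j, v x j * pd l j x)
      + (1/2) * (divg v x * l x) := by
    rw [hG]; funext x; ring
  have hg1 : ContDiff ℝ 1 (fun y => -ε * lap l y) := contDiff_const.mul hlapl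
  have hg2 : ContDiff ℝ 1 (fun y => k * l y) := contDiff_const.mul hl1
  have hg3 : ContDiff ℝ 1 (fun y => ∑ j, v y j * pd l j y) :=
    ContDiff.sum fun j _ => ((hvc j).of_le (by norm_num)).mul (hdl1 j)
  have hg4 : ContDiff ℝ 1 (fun y => (1/2) * (divg v y * l y)) :=
    contDiff_const.mul ((hdv.of_le (by norm_num)).mul hl1)
  have dg1 : Differentiable ℝ (fun y => -ε * lap l y) := hg1.differentiable one_ne_zero
  have dg2 : Differentiable ℝ (fun y => k * l y) := hg2.differentiable one_ne_zero
  have dg3 : Differentiable ℝ (fun y => ∑ j, v y j * pd l j y) := hg3.differentiable one_ne_zero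
  have dg4 : Differentiable ℝ (fun y => (1/2) * (divg v y * l y)) := hg4.differentiable one_ne_zero
  have hpdG : ∀ (i : Fin 3) (x : E3), pd G i x
      = pd (fun y => -ε * lap l y) i x + pd (fun y => k * l y) i x
        + pd (fun y => ∑ j, v y j * pd l j y) i x
        + pd (fun y => (1/2) * (divg v y * l y)) i x := by
    intro i x
    have dA : DifferentiableAt ℝ (fun y => -ε * lap l y + k * l y) x := (dg1 x).add (dg2 x)
    have dB : DifferentiableAt ℝ (fun y => -ε * lap l y + k * l y + ∑ j, v y j * pd l j y) x :=
      dA.add (dg3 x)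
    have eC : pd (fun y => (-ε * lap l y + k * l y + ∑ j, v y j * pd l j y)
          + (1/2) * (divg v y * l y)) i x
        = pd (fun y => -ε * lap l y + k * l y + ∑ j, v y j * pd l j y) i x
          + pd (fun y => (1/2) * (divg v y * l y)) i x := pd_add dB (dg4 x) i
    have eA : pd (fun y => -ε * lap l y + k * l y + ∑ j, v y j * pd l j y) i x
        = pd (fun y => -ε * lap l y + k * l y) i x + pd (fun y => ∑ j, v y j * pd l j y) i x :=
      pd_add dA (dg3 x) i
    have eB : pd (fun y => -ε * lap l y + k * l y) i x
        = pd (fun y => -ε * lap l y) i x + pd (fun y => k * l y) i x := pd_add (dg1 x) (dg2 x) i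
    rw [hG', eC, eA, eB]
  -- integrability of the four pieces
  have intg1 : Integrable (fun x => ∑ i, pd (fun y => -ε * lap l y) i x * pd l i x) :=
    integrable_finset_sum _ fun i _ =>
      intg (contDiff_pd (m := 0) hg1 (by norm_num) i).continuous (hdlc i) (hdls i)
  have intg2 : Integrable (fun x => ∑ i, pd (fun y => k * l y) i x * pd l i x) :=
    integrable_finset_sum _ fun i _ =>
      intg (contDiff_pd (m := 0) hg2 (by norm_num) i).continuous (hdlc i) (hdls i)
  have intg3 : Integrable (fun x => ∑ i, pd (fun y => ∑ j, v y j * pd l j y) i x * pd l i x) :=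
    integrable_finset_sum _ fun i _ =>
      intg (contDiff_pd (m := 0) hg3 (by norm_num) i).continuous (hdlc i) (hdls i)
  have intg4 : Integrable (fun x => ∑ i, pd (fun y => (1/2) * (divg v y * l y)) i x * pd l i x) :=
    integrable_finset_sum _ fun i _ =>
      intg (contDiff_pd (m := 0) hg4 (by norm_num) i).continuous (hdlc i) (hdls i)
  have hsplit : (∫ x, ∑ i, pd G i x * pd l i x)
      = (∫ x, ∑ i, pd (fun y => -ε * lap l y) i x * pd l i x)
        + (∫ x, ∑ i, pd (fun y => k * l y) i x * pd l i x)
        + (∫ x, ∑ i, pd (fun y => ∑ j, v y j * pd l j y) i x * pd l i x)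
        + (∫ x, ∑ i, pd (fun y => (1/2) * (divg v y * l y)) i x * pd l i x) := by
    have e : (fun x => ∑ i, pd G i x * pd l i x)
        = fun x => (∑ i, pd (fun y => -ε * lap l y) i x * pd l i x)
          + (∑ i, pd (fun y => k * l y) i x * pd l i x)
          + (∑ i, pd (fun y => ∑ j, v y j * pd l j y) i x * pd l i x)
          + (∑ i, pd (fun y => (1/2) * (divg v y * l y)) i x * pd l i x) := by
      funext x
      rw [← Finset.sum_add_distrib, ← Finset.sum_add_distrib, ← Finset.sum_add_distrib]
      exact Finset.sum_congr rfl fun i _ => by rw [hpdG i x]; ring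
    have T1 : (∫ x, (∑ i, pd (fun y => -ε * lap l y) i x * pd l i x)
          + (∑ i, pd (fun y => k * l y) i x * pd l i x)
          + (∑ i, pd (fun y => ∑ j, v y j * pd l j y) i x * pd l i x)
          + (∑ i, pd (fun y => (1/2) * (divg v y * l y)) i x * pd l i x))
        = (∫ x, (∑ i, pd (fun y => -ε * lap l y) i x * pd l i x)
          + (∑ i, pd (fun y => k * l y) i x * pd l i x)
          + (∑ i, pd (fun y => ∑ j, v y j * pd l j y) i x * pd l i x))
          + (∫ x, ∑ i, pd (fun y => (1/2) * (divg v y * l y)) i x * pd l i x) :=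
      integral_add ((intg1.add intg2).add intg3) intg4
    have T2 : (∫ x, (∑ i, pd (fun y => -ε * lap l y) i x * pd l i x)
          + (∑ i, pd (fun y => k * l y) i x * pd l i x)
          + (∑ i, pd (fun y => ∑ j, v y j * pd l j y) i x * pd l i x))
        = (∫ x, (∑ i, pd (fun y => -ε * lap l y) i x * pd l i x)
          + (∑ i, pd (fun y => k * l y) i x * pd l i x))
          + (∫ x, ∑ i, pd (fun y => ∑ j, v y j * pd l j y) i x * pd l i x) :=
      integral_add (intg1.add intg2) intg3
    have T3 : (∫ x, (∑ i, pd (fun y => -ε * lap l y) i x * pd l i x)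
          + (∑ i, pd (fun y => k * l y) i x * pd l i x))
        = (∫ x, ∑ i, pd (fun y => -ε * lap l y) i x * pd l i x)
          + (∫ x, ∑ i, pd (fun y => k * l y) i x * pd l i x) :=
      integral_add intg1 intg2
    rw [e, T1, T2, T3]
  -- KEY 1 : the ε-term
  have ibp1 : ∀ i : Fin 3, (∫ x, pd (lap l) i x * pd l i x)
      = -∫ x, lap l x * pd (pd l i) i x := by
    intro i
    have h := ibp_right hlapl (hdl1 i) (hdls i) i
    linarith
  have key1 : (∫ x, ∑ i, pd (fun y => -ε * lap l y) i x * pd l i x)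
      = ε * ∫ x, (lap l x) ^ 2 := by
    have e : (fun x => ∑ i, pd (fun y => -ε * lap l y) i x * pd l i x)
        = fun x => -ε * ∑ i, pd (lap l) i x * pd l i x := by
      funext x; rw [Finset.mul_sum]
      exact Finset.sum_congr rfl fun i _ => by rw [pd_const_mul (dlapl x) (-ε) i]; ring
    rw [e, integral_const_mul,
      integral_finset_sum _ (fun i _ =>
        intg (contDiff_pd (m := 0) hlapl (by norm_num) i).continuous (hdlc i) (hdls i))]
    have e2 : (∑ i, ∫ x, pd (lap l) i x * pd l i x)
        = ∑ i : Fin 3, -∫ x, lap l x * pd (pd l i) i x :=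
      Finset.sum_congr rfl fun i _ => ibp1 i
    rw [e2, Finset.sum_neg_distrib,
      ← integral_finset_sum _ (fun i _ => intg hlapl.continuous (hddlc i i) (hddls i i))]
    have e3 : (fun x => ∑ i, lap l x * pd (pd l i) i x) = fun x => (lap l x) ^ 2 := by
      funext x; rw [← Finset.mul_sum, sq]; rfl
    rw [e3]; ring
  -- KEY 2 : the k-term
  have key2 : (∫ x, ∑ i, pd (fun y => k * l y) i x * pd l i x)
      = k * ∫ x, ∑ i, (pd l i x) ^ 2 := by
    have e : (fun x => ∑ i, pd (fun y => k * l y) i x * pd l i x)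
        = fun x => k * ∑ i, (pd l i x) ^ 2 := by
      funext x; rw [Finset.mul_sum]
      exact Finset.sum_congr rfl fun i _ => by rw [pd_const_mul (dld x) k i]; ring
    rw [e, integral_const_mul]
  -- KEY 3 : the transport term
  have p3 : ∀ (i : Fin 3) (x : E3), pd (fun y => ∑ j, v y j * pd l j y) i x
      = ∑ j, (pd (fun y => v y j) i x * pd l j x + v x j * pd (pd l j) i x) := by
    intro i x
    have e0 : pd (fun y => ∑ j, v y j * pd l j y) i x
        = ∑ j, pd (fun y => v y j * pd l j y) i x :=
      pd_sum (fun j => (dvc j x).mul (dl_d j x)) i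
    rw [e0]
    exact Finset.sum_congr rfl fun j _ => pd_mul (dvc j x) (dl_d j x) i
  have intA : ∀ i j : Fin 3,
      Integrable (fun x => pd (fun y => v y j) i x * pd l j x * pd l i x) := fun i j =>
    intg ((hpdvc j i).mul (hdlc j)) (hdlc i) (hdls i)
  have intB : ∀ i j : Fin 3,
      Integrable (fun x => v x j * pd (pd l j) i x * pd l i x) := fun i j =>
    intg ((hvcc j).mul (hddlc j i)) (hdlc i) (hdls i)
  have e3 : (fun x => ∑ i, pd (fun y => ∑ j, v y j * pd l j y) i x * pd l i x)
      = fun x => (∑ i, ∑ j, pd (fun y => v y j) i x * pd l j x * pd l i x)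
        + (∑ i, ∑ j, v x j * pd (pd l j) i x * pd l i x) := by
    funext x
    rw [← Finset.sum_add_distrib]
    refine Finset.sum_congr rfl fun i _ => ?_
    rw [p3 i x, Finset.sum_mul, ← Finset.sum_add_distrib]
    exact Finset.sum_congr rfl fun j _ => by ring
  have key3A : (∫ x, ∑ i, ∑ j, pd (fun y => v y j) i x * pd l j x * pd l i x)
      = ∑ i, ∑ j, ∫ x, pd (fun y => v y i) j x * pd l i x * pd l j x := by
    rw [integral_finset_sum _ (fun i _ => integrable_finset_sum _ fun j _ => intA i j)]
    have e : (∑ i : Fin 3, ∫ x, ∑ j, pd (fun y => v y j) i x * pd l j x * pd l i x)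
        = ∑ i : Fin 3, ∑ j : Fin 3, ∫ x, pd (fun y => v y j) i x * pd l j x * pd l i x :=
      Finset.sum_congr rfl fun i _ => integral_finset_sum _ fun j _ => intA i j
    rw [e]
    exact Finset.sum_comm
  -- pointwise derivative of |∇l|²
  have pq : ∀ (j : Fin 3) (x : E3), pd (fun y => ∑ i, pd l i y * pd l i y) j x
      = ∑ i, (pd (pd l i) j x * pd l i x + pd l i x * pd (pd l i) j x) := by
    intro j x
    have e0 : pd (fun y => ∑ i, pd l i y * pd l i y) j x
        = ∑ i, pd (fun y => pd l i y * pd l i y) j x :=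
      pd_sum (fun i => (dl_d i x).mul (dl_d i x)) j
    rw [e0]
    exact Finset.sum_congr rfl fun i _ => pd_mul (dl_d i x) (dl_d i x) j
  have keyB : ∀ j : Fin 3, (∫ x, ∑ i, v x j * pd (pd l j) i x * pd l i x)
      = -((1/2) * ∫ x, pd (fun y => v y j) j x * ∑ i, pd l i x * pd l i x) := by
    intro j
    have e : (fun x => ∑ i, v x j * pd (pd l j) i x * pd l i x)
        = fun x => (1/2) * (v x j * pd (fun y => ∑ i, pd l i y * pd l i y) j x) := by
      funext x
      rw [pq j x, Finset.mul_sum, Finset.mul_sum]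
      refine Finset.sum_congr rfl fun i _ => ?_
      rw [pd_comm hl2 j i x]
      ring
    have hibp : (∫ x, v x j * pd (fun y => ∑ i, pd l i y * pd l i y) j x)
        = -∫ x, pd (fun y => v y j) j x * ∑ i, pd l i x * pd l i x :=
      ibp_right ((hvc j).of_le (by norm_num)) hq hqs j
    rw [e, integral_const_mul, hibp]
    ring
  have key3B : (∫ x, ∑ i, ∑ j, v x j * pd (pd l j) i x * pd l i x)
      = -((1/2) * ∫ x, divg v x * ∑ i, pd l i x * pd l i x) := by
    have esum : (fun x => ∑ i, ∑ j, v x j * pd (pd l j) i x * pd l i x)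
        = fun x => ∑ j, ∑ i, v x j * pd (pd l j) i x * pd l i x := by
      funext x; exact Finset.sum_comm
    rw [esum, integral_finset_sum _ (fun j _ => integrable_finset_sum _ fun i _ => intB i j)]
    have e : (∑ j : Fin 3, ∫ x, ∑ i, v x j * pd (pd l j) i x * pd l i x)
        = ∑ j : Fin 3, -((1/2) * ∫ x, pd (fun y => v y j) j x * ∑ i, pd l i x * pd l i x) :=
      Finset.sum_congr rfl fun j _ => keyB j
    rw [e, Finset.sum_neg_distrib, ← Finset.mul_sum,
      ← integral_finset_sum _ (fun j _ => intg (hpdvc j j) hq.continuous hqs)]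
    have e2 : (fun x => ∑ j, pd (fun y => v y j) j x * ∑ i, pd l i x * pd l i x)
        = fun x => divg v x * ∑ i, pd l i x * pd l i x := by
      funext x; rw [← Finset.sum_mul]; rfl
    rw [e2]
  have key3 : (∫ x, ∑ i, pd (fun y => ∑ j, v y j * pd l j y) i x * pd l i x)
      = (∑ i, ∑ j, ∫ x, pd (fun y => v y i) j x * pd l i x * pd l j x)
        - (1/2) * (∫ x, divg v x * ∑ i, pd l i x * pd l i x) := by
    have T : (∫ x, (∑ i, ∑ j, pd (fun y => v y j) i x * pd l j x * pd l i x)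
          + (∑ i, ∑ j, v x j * pd (pd l j) i x * pd l i x))
        = (∫ x, ∑ i, ∑ j, pd (fun y => v y j) i x * pd l j x * pd l i x)
          + (∫ x, ∑ i, ∑ j, v x j * pd (pd l j) i x * pd l i x) :=
      integral_add
        (integrable_finset_sum _ fun i _ => integrable_finset_sum _ fun j _ => intA i j)
        (integrable_finset_sum _ fun i _ => integrable_finset_sum _ fun j _ => intB i j)
    rw [e3, T, key3A, key3B]
    ring
  -- KEY 4 : the divergence term
  have p4 : ∀ (i : Fin 3) (x : E3), pd (fun y => (1/2) * (divg v y * l y)) i x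
      = (1/2) * (pd (divg v) i x * l x + divg v x * pd l i x) := by
    intro i x
    have e0 : pd (fun y => (1/2) * (divg v y * l y)) i x
        = (1/2) * pd (fun y => divg v y * l y) i x :=
      pd_const_mul ((ddv x).mul (dld x)) (1/2) i
    rw [e0, pd_mul (ddv x) (dld x) i]
  have pr : ∀ (i : Fin 3) (x : E3), pd (fun y => l y * l y) i x
      = pd l i x * l x + l x * pd l i x := fun i x => pd_mul (dld x) (dld x) i
  have e4 : (fun x => ∑ i, pd (fun y => (1/2) * (divg v y * l y)) i x * pd l i x)
      = fun x => (∑ i, (1/4) * (pd (fun y => l y * l y) i x * pd (divg v) i x))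
        + (1/2) * (divg v x * ∑ i, pd l i x * pd l i x) := by
    funext x
    have e0 : (1/2) * (divg v x * ∑ i, pd l i x * pd l i x)
        = ∑ i, (1/2) * (divg v x * (pd l i x * pd l i x)) := by
      rw [Finset.mul_sum, Finset.mul_sum]
    rw [e0, ← Finset.sum_add_distrib]
    refine Finset.sum_congr rfl fun i _ => ?_
    rw [p4 i x, pr i x]; ring
  have I4Ai : ∀ i : Fin 3,
      Integrable (fun x => (1/4) * (pd (fun y => l y * l y) i x * pd (divg v) i x)) := fun i =>
    (intg' (contDiff_pd (m := 0) hr (by norm_num) i).continuous (hddv i).continuous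
      (hasCompactSupport_pd hrs i)).const_mul (1/4)
  have ib4 : ∀ i : Fin 3, (∫ x, pd (fun y => l y * l y) i x * pd (divg v) i x)
      = -∫ x, l x * l x * pd (pd (divg v) i) i x := by
    intro i
    have h : (∫ x, l x * l x * pd (pd (divg v) i) i x)
        = -∫ x, pd (fun y => l y * l y) i x * pd (divg v) i x := ibp_left hr (hddv i) hrs i
    linarith
  have key4 : (∫ x, ∑ i, pd (fun y => (1/2) * (divg v y * l y)) i x * pd l i x)
      = -((1/4) * ∫ x, (l x) ^ 2 * lap (divg v) x)
        + (1/2) * (∫ x, divg v x * ∑ i, pd l i x * pd l i x) := by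
    have T : (∫ x, (∑ i, (1/4) * (pd (fun y => l y * l y) i x * pd (divg v) i x))
          + (1/2) * (divg v x * ∑ i, pd l i x * pd l i x))
        = (∫ x, ∑ i, (1/4) * (pd (fun y => l y * l y) i x * pd (divg v) i x))
          + (∫ x, (1/2) * (divg v x * ∑ i, pd l i x * pd l i x)) :=
      integral_add (integrable_finset_sum _ fun i _ => I4Ai i)
        ((intg hdvc hq.continuous hqs).const_mul (1/2))
    rw [e4, T, integral_const_mul,
      integral_finset_sum _ (fun i _ => I4Ai i)]
    have eS : (∑ i : Fin 3, ∫ x, (1/4) * (pd (fun y => l y * l y) i x * pd (divg v) i x))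
        = ∑ i : Fin 3, (1/4) * -∫ x, l x * l x * pd (pd (divg v) i) i x := by
      refine Finset.sum_congr rfl fun i _ => ?_
      rw [integral_const_mul, ib4 i]
    have eS2 : (∑ i : Fin 3, (1/4) * -∫ x, l x * l x * pd (pd (divg v) i) i x)
        = -((1/4) * ∑ i : Fin 3, ∫ x, l x * l x * pd (pd (divg v) i) i x) := by
      rw [← Finset.mul_sum, Finset.sum_neg_distrib]
      ring
    have eS3 : (∑ i : Fin 3, ∫ x, l x * l x * pd (pd (divg v) i) i x)
        = ∫ x, ∑ i, l x * l x * pd (pd (divg v) i) i x :=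
      (integral_finset_sum _ fun i _ => intg' hr.continuous (hdddvc i) hrs).symm
    have eS4 : (fun x => ∑ i, l x * l x * pd (pd (divg v) i) i x)
        = fun x => (l x) ^ 2 * lap (divg v) x := by
      funext x
      rw [← Finset.mul_sum, sq]
      rfl
    rw [eS, eS2, eS3, eS4]
  rw [hsplit, key1, key2, key3, key4]
  ring

end
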